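/- Let R be a local ring with maximal ideal 𝔪 and residue field k = R/𝔪 of characteristic different from 2, and let M be a free R-module of finite rank equipped with a non-degenerate quadratic form Q. Then the natural group homomorphism O_R(M) → O_k(M̄) from the orthogonal group of (M,Q) over R to the orthogonal group of the reduced form (M̄, Q̄) over k, induced by reduction modulo 𝔪, is surjective. -/

import Mathlib

open Submodule IsLocalRing

namespace CDlift
open QuadraticMap

section CommRing
variable {R M : Type*} [CommRing R] [AddCommGroup M] [Module R M]

noncomputable def qreflMap (Q : QuadraticForm R M) (v : M) : M →ₗ[R] M :=
  LinearMap.id - ((Ring.inverse (Q v)) • (Q.polarBilin v)).smulRight v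

lemma qreflMap_apply (Q : QuadraticForm R M) (v x : M) :
    qreflMap Q v x = x - (Ring.inverse (Q v) * polar Q v x) • v := by
  simp [qreflMap, LinearMap.smulRight_apply, smul_smul]

lemma map_add' (Q : QuadraticForm R M) (a b : M) :
    Q (a + b) = Q a + Q b + polar Q a b := by
  rw [polar]; ring

lemma qreflMap_invol (Q : QuadraticForm R M) (v : M) :
    Function.Involutive (qreflMap Q v) := by
  intro x
  by_cases h : IsUnit (Q v)
  · have hinv : Ring.inverse (Q v) * Q v = 1 := Ring.inverse_mul_cancel _ h
    rw [qreflMap_apply, qreflMap_apply, polar_sub_right, polar_smul_right, polar_self,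
      smul_eq_mul, nsmul_eq_mul]
    push_cast
    match_scalars
    · ring
    · linear_combination (Ring.inverse (Q v) * polar Q v x * 2) * hinv
  · rw [qreflMap_apply, qreflMap_apply, Ring.inverse_non_unit _ h]
    simp

lemma qreflMap_map_quadratic (Q : QuadraticForm R M) (v x : M) :
    Q (qreflMap Q v x) = Q x := by
  rw [qreflMap_apply, sub_eq_add_neg, ← neg_smul, map_add', QuadraticMap.map_smul,
    polar_smul_right, smul_eq_mul, smul_eq_mul]
  by_cases h : IsUnit (Q v)
  · have hinv : Ring.inverse (Q v) * Q v = 1 := Ring.inverse_mul_cancel _ h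
    rw [show polar (⇑Q) x v = polar (⇑Q) v x from polar_comm _ _ _]
    linear_combination (Ring.inverse (Q v) * polar (⇑Q) v x * polar (⇑Q) v x) * hinv
  · rw [Ring.inverse_non_unit _ h]
    ring

noncomputable def qrefl (Q : QuadraticForm R M) (v : M) : M ≃ₗ[R] M :=
  { qreflMap Q v with
    invFun := qreflMap Q v
    left_inv := qreflMap_invol Q v
    right_inv := qreflMap_invol Q v }

lemma qrefl_apply (Q : QuadraticForm R M) (v x : M) :
    qrefl Q v x = x - (Ring.inverse (Q v) * polar Q v x) • v :=
  qreflMap_apply Q v x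

lemma qrefl_map_quadratic (Q : QuadraticForm R M) (v x : M) :
    Q (qrefl Q v x) = Q x :=
  qreflMap_map_quadratic Q v x

lemma qrefl_mul_self (Q : QuadraticForm R M) (v : M) :
    qrefl Q v * qrefl Q v = 1 := by
  ext x
  exact qreflMap_invol Q v x

lemma qrefl_fix (Q : QuadraticForm R M) {w x : M} (h : polar Q w x = 0) :
    qrefl Q w x = x := by
  rw [qrefl_apply, h, mul_zero, zero_smul, sub_zero]

lemma prod_qrefl_map_quadratic (Q : QuadraticForm R M) (l : List M) (x : M) :
    Q ((l.map (qrefl Q)).prod x) = Q x := by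
  induction l generalizing x with
  | nil => simp
  | cons a t ih =>
      rw [List.map_cons, List.prod_cons]
      show Q ((qrefl Q a) ((List.map (qrefl Q) t).prod x)) = Q x
      rw [qrefl_map_quadratic, ih]

end CommRing

section Field

universe u

variable {K : Type*} [Field K]

lemma exists_anisotropic {V : Type u} [AddCommGroup V] [Module K V] [Nontrivial V]
    {Q : QuadraticForm K V} (hQ : LinearMap.BilinForm.Nondegenerate (polarBilin Q)) :
    ∃ v, Q v ≠ 0 := by
  by_contra h
  push_neg at h
  obtain ⟨x, hx⟩ := exists_ne (0 : V)
  apply hx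
  apply hQ.1
  intro n
  have hp : polar Q x n = 0 := by rw [polar, h, h, h]; ring
  simpa using hp

theorem cartan_dieudonne (h2 : (2:K) ≠ 0) (n : ℕ) :
    ∀ {V : Type u} [AddCommGroup V] [Module K V] [FiniteDimensional K V]
      (Q : QuadraticForm K V), LinearMap.BilinForm.Nondegenerate (polarBilin Q) →
      ∀ (g : V ≃ₗ[K] V), (∀ x, Q (g x) = Q x) → Module.finrank K V = n →
      ∃ l : List V, (∀ v ∈ l, Q v ≠ 0) ∧ g = (l.map (qrefl Q)).prod := by
  induction n with
  | zero =>
    intro V _ _ _ Q hQ g hg hn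
    refine ⟨[], by simp, ?_⟩
    have : Subsingleton V := Module.finrank_zero_iff.mp hn
    ext x
    simp [Subsingleton.elim x 0]
  | succ n ih =>
    intro V _ _ _ Q hQnd g hg hn
    have hnt : Nontrivial V := Module.nontrivial_of_finrank_pos (R := K) (hn ▸ n.succ_pos)
    obtain ⟨v, hv⟩ := exists_anisotropic hQnd
    -- step 1 : two lists moving `g v` back to `v`
    have key : ∀ u : V, Q u ≠ 0 → polar Q u (g v) = Q u → qrefl Q u (g v) = g v - u := by
      intro u hu hp
      rw [qrefl_apply, hp, Ring.inverse_mul_cancel _ (isUnit_iff_ne_zero.mpr hu), one_smul]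
    obtain ⟨l₀, l₀', hQ₀, hQ₀', hinv01, happ⟩ :
        ∃ l₀ l₀' : List V, (∀ u ∈ l₀, Q u ≠ 0) ∧ (∀ u ∈ l₀', Q u ≠ 0) ∧
          (l₀'.map (qrefl Q)).prod * (l₀.map (qrefl Q)).prod = 1 ∧
          (l₀.map (qrefl Q)).prod (g v) = v := by
      have hgv : Q (g v) = Q v := hg v
      by_cases hu : Q (g v - v) ≠ 0
      · refine ⟨[g v - v], [g v - v], by simpa using hu, by simpa using hu, ?_, ?_⟩
        · simp only [List.map_cons, List.map_nil, List.prod_cons, List.prod_nil, mul_one]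
          exact qrefl_mul_self Q _
        · simp only [List.map_cons, List.map_nil, List.prod_cons, List.prod_nil, mul_one]
          have e1 : Q (g v - v) = Q v + Q v - polar Q (g v) v := by
            rw [sub_eq_add_neg, map_add' Q (g v) (-v), QuadraticMap.map_neg, polar_neg_right, hgv]
            ring
          have e2 : polar Q (g v - v) (g v) = Q v + Q v - polar Q (g v) v := by
            rw [polar_sub_left, polar_self, two_nsmul, hgv,
              show polar (⇑Q) v (g v) = polar (⇑Q) (g v) v from polar_comm _ _ _]
          rw [key _ hu (e2.trans e1.symm)]
          abel
      · push_neg at hu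
        have hw : Q (g v + v) ≠ 0 := by
          intro hw0
          apply hv
          have e1 : Q (g v - v) + Q (g v + v) = 4 * Q v := by
            rw [sub_eq_add_neg, map_add', map_add', QuadraticMap.map_neg, polar_neg_right, hgv]
            ring
          have : (4 : K) * Q v = 0 := by rw [← e1, hu, hw0, add_zero]
          have h4 : (4 : K) ≠ 0 := by
            rw [show (4:K) = 2 * 2 by norm_num]
            exact mul_ne_zero h2 h2
          exact (mul_eq_zero.mp this).resolve_left h4
        refine ⟨[v, g v + v], [g v + v, v], ?_, ?_, ?_, ?_⟩
        · intro u hu'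
          rcases List.mem_cons.mp hu' with rfl | hu'
          · exact hv
          · rcases List.mem_cons.mp hu' with rfl | hu'
            · exact hw
            · simp at hu'
        · intro u hu'
          rcases List.mem_cons.mp hu' with rfl | hu'
          · exact hw
          · rcases List.mem_cons.mp hu' with rfl | hu'
            · exact hv
            · simp at hu'
        · simp only [List.map_cons, List.map_nil, List.prod_cons, List.prod_nil, mul_one]
          rw [mul_assoc, ← mul_assoc (qrefl Q v)]
          rw [qrefl_mul_self, one_mul]
          try rw [qrefl_mul_self]
        · simp only [List.map_cons, List.map_nil, List.prod_cons, List.prod_nil, mul_one]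
          have e1 : Q (g v + v) = Q v + Q v + polar Q (g v) v := by
            rw [map_add' Q (g v) v, hgv]
          have e2 : polar Q (g v + v) (g v) = Q v + Q v + polar Q (g v) v := by
            rw [polar_add_left, polar_self, two_nsmul, hgv,
              show polar (⇑Q) v (g v) = polar (⇑Q) (g v) v from polar_comm _ _ _]
          have hvv : qrefl Q v v = -v := by
            have hc : Ring.inverse (Q v) * (Q v + Q v) = 2 := by
              rw [show Q v + Q v = Q v * 2 by ring, ← mul_assoc,
                Ring.inverse_mul_cancel _ (isUnit_iff_ne_zero.mpr hv), one_mul]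
            rw [qrefl_apply, polar_self, two_nsmul, hc, two_smul]
            abel
          show qrefl Q v ((qrefl Q (g v + v)) (g v)) = v
          rw [key _ hw (e2.trans e1.symm), show g v - (g v + v) = -v by abel,
            _root_.map_neg, hvv, neg_neg]
    -- step 2 : the corrected isometry fixing `v`
    set g' : V ≃ₗ[K] V := (l₀.map (qrefl Q)).prod * g with hg'def
    have hg'Q : ∀ x, Q (g' x) = Q x := by
      intro x
      show Q ((l₀.map (qrefl Q)).prod (g x)) = Q x
      rw [prod_qrefl_map_quadratic, hg]
    have hg'B : ∀ x y, polar Q (g' x) (g' y) = polar Q x y := by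
      intro x y
      rw [polar, polar, ← map_add g', hg'Q, hg'Q, hg'Q]
    have hg'v : g' v = v := happ
    -- step 3 : the orthogonal complement
    have hsymm : (polarBilin Q).IsSymm := ⟨fun x y => polar_comm _ _ _⟩
    have hvv : ¬ LinearMap.BilinForm.IsOrtho (polarBilin Q) v v := by
      rw [LinearMap.BilinForm.isOrtho_def, polarBilin_apply_apply, polar_self, two_nsmul,
        show Q v + Q v = 2 * Q v by ring]
      exact mul_ne_zero h2 hv
    set W : Submodule K V := LinearMap.BilinForm.orthogonal (polarBilin Q) (K ∙ v) with hWdef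
    have hWmem : ∀ x ∈ W, polar Q v x = 0 := by
      intro x hx
      have := (LinearMap.BilinForm.mem_orthogonal_iff.mp hx) v (Submodule.mem_span_singleton_self v)
      rwa [polarBilin_apply_apply] at this
    have hW1 : ∀ x ∈ W, g' x ∈ W := by
      intro x hx
      rw [LinearMap.BilinForm.mem_orthogonal_iff]
      intro nn hn
      rcases Submodule.mem_span_singleton.mp hn with ⟨a, rfl⟩
      rw [_root_.map_smul, LinearMap.smul_apply,
        polarBilin_apply_apply, smul_eq_mul]
      have : polar Q v (g' x) = 0 := by
        conv_lhs => rw [← hg'v]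
        rw [hg'B, hWmem x hx]
      rw [this, mul_zero]
    have hW2 : ∀ x ∈ W, g'.symm x ∈ W := by
      intro x hx
      rw [LinearMap.BilinForm.mem_orthogonal_iff]
      intro nn hn
      rcases Submodule.mem_span_singleton.mp hn with ⟨a, rfl⟩
      rw [_root_.map_smul, LinearMap.smul_apply,
        polarBilin_apply_apply, smul_eq_mul]
      have : polar Q v (g'.symm x) = 0 := by
        have h1 := hg'B v (g'.symm x)
        rw [hg'v, g'.apply_symm_apply] at h1
        rw [← h1, hWmem x hx]
      rw [this, mul_zero]
    set gW : W ≃ₗ[K] W := LinearEquiv.ofLinear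
        (g'.toLinearMap.restrict hW1) (g'.symm.toLinearMap.restrict hW2)
        (by ext x; simp [LinearMap.restrict_apply])
        (by ext x; simp [LinearMap.restrict_apply]) with hgWdef
    have hgWapp : ∀ x : W, (gW x : V) = g' ↑x := fun x => rfl
    set QW : QuadraticForm K W := Q.comp W.subtype with hQWdef
    have hQWapp : ∀ x : W, QW x = Q ↑x := fun x => rfl
    have hQW_polar : ∀ x y : W, polar QW x y = polar Q (↑x) (↑y) := by
      intro x y
      rw [polar, polar, hQWapp, hQWapp, hQWapp]
      rfl
    have hgWQ : ∀ x : W, QW (gW x) = QW x := by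
      intro x
      rw [hQWapp, hQWapp, hgWapp, hg'Q]
    have hQWnd : LinearMap.BilinForm.Nondegenerate (polarBilin QW) := by
      have hres := LinearMap.BilinForm.restrict_nondegenerate_orthogonal_spanSingleton
        (polarBilin Q) hQnd (LinearMap.BilinForm.IsSymm.isRefl (LinearMap.BilinForm.isSymm_iff.mpr hsymm)) hvv
      constructor
      · intro m hm
        apply hres.1 m
        intro nn
        have := hm nn
        rw [polarBilin_apply_apply, hQW_polar] at this
        simpa [LinearMap.BilinForm.restrict_apply, polarBilin_apply_apply] using this
      · intro m hm
        apply hres.2 m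
        intro nn
        have := hm nn
        rw [polarBilin_apply_apply, hQW_polar] at this
        simpa [LinearMap.BilinForm.restrict_apply, polarBilin_apply_apply] using this
    have hWn : Module.finrank K W = n := by
      have hv0 : v ≠ 0 := by
        intro h0
        exact hv (by rw [h0, QuadraticMap.map_zero])
      have h1 : Module.finrank K (K ∙ v) = 1 := finrank_span_singleton hv0
      have hsum := Submodule.finrank_add_eq_of_isCompl
        (LinearMap.BilinForm.isCompl_span_singleton_orthogonal hvv)
      rw [h1, hn, ← hWdef] at hsum
      omega
    obtain ⟨lW, hlWQ, hlW⟩ := ih QW hQWnd gW hgWQ hWn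
    -- step 4 : transfer back to V
    have hpoint : ∀ w z : W, qrefl Q (↑w) ↑z = ↑(qrefl QW w z) := by
      intro w z
      rw [qrefl_apply, qrefl_apply, hQWapp, hQW_polar]
      push_cast
      rfl
    have hcoe : ∀ (t : List W) (x : W),
        ((t.map (fun w : W => qrefl Q (↑w))).prod) ↑x = ↑((t.map (qrefl QW)).prod x) := by
      intro t
      induction t with
      | nil => intro x; simp
      | cons a s ihs =>
          intro x
          rw [List.map_cons, List.prod_cons, List.map_cons, List.prod_cons]
          show qrefl Q (↑a) (((s.map (fun w : W => qrefl Q (↑w))).prod) ↑x) = _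
          rw [ihs, hpoint]
          rfl
    have hfixv : ∀ (t : List W), (∀ w ∈ t, True) →
        ((t.map (fun w : W => qrefl Q (↑w))).prod) v = v := by
      intro t _
      induction t with
      | nil => simp
      | cons a s ihs =>
          rw [List.map_cons, List.prod_cons]
          show qrefl Q (↑a) (((s.map (fun w : W => qrefl Q (↑w))).prod) v) = v
          rw [ihs (by simp)]
          exact qrefl_fix Q (by rw [polar_comm]; exact hWmem _ a.2)
    have hg'eq : g' = ((lW.map (fun w : W => (↑w : V))).map (qrefl Q)).prod := by
      have hmm : (lW.map (fun w : W => (↑w : V))).map (qrefl Q)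
          = lW.map (fun w : W => qrefl Q (↑w)) := by
        rw [List.map_map]; rfl
      rw [hmm]
      ext x
      have hx : x ∈ (K ∙ v) ⊔ W := by
        rw [LinearMap.BilinForm.span_singleton_sup_orthogonal_eq_top hvv]
        trivial
      rcases Submodule.mem_sup.mp hx with ⟨s, hs, w, hw, rfl⟩
      rcases Submodule.mem_span_singleton.mp hs with ⟨a, rfl⟩
      rw [map_add, map_add, _root_.map_smul, _root_.map_smul, hg'v, hfixv lW (by simp)]
      congr 1
      show g' ↑(⟨w, hw⟩ : W) = _
      rw [← hgWapp ⟨w, hw⟩, hlW, ← hcoe]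
    refine ⟨l₀' ++ lW.map (fun w : W => (↑w : V)), ?_, ?_⟩
    · intro u hu
      rcases List.mem_append.mp hu with hu | hu
      · exact hQ₀' u hu
      · rcases List.mem_map.mp hu with ⟨w, hwmem, rfl⟩
        have := hlWQ w hwmem
        rwa [hQWapp] at this
    · rw [List.map_append, List.prod_append, ← hg'eq, hg'def, ← mul_assoc, hinv01, one_mul]

end Field

section Reduction

open IsLocalRing

variable {R : Type*} [CommRing R] [IsLocalRing R] {M : Type*} [AddCommGroup M] [Module R M]

local notation "𝕜" => R ⧸ maximalIdeal R
local notation "Mb" => M ⧸ (maximalIdeal R • ⊤ : Submodule R M)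
local notation "π" => Ideal.Quotient.mk (maximalIdeal R)
local notation "mkk" => Submodule.Quotient.mk (p := (maximalIdeal R • ⊤ : Submodule R M))

lemma polar_mem_of (Q : QuadraticForm R M) (x : M) {m : M}
    (hm : m ∈ (maximalIdeal R • ⊤ : Submodule R M)) : polar Q x m ∈ maximalIdeal R := by
  refine Submodule.smul_induction_on hm (fun r hr n _ => ?_) (fun a b ha hb => ?_)
  · rw [polar_smul_right, smul_eq_mul]
    exact Ideal.mul_mem_right _ _ hr
  · rw [polar_add_right]
    exact Ideal.add_mem _ ha hb

lemma quadratic_mem_of (Q : QuadraticForm R M) {m : M}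
    (hm : m ∈ (maximalIdeal R • ⊤ : Submodule R M)) : Q m ∈ maximalIdeal R := by
  have : Q m ∈ maximalIdeal R ∧ m ∈ (maximalIdeal R • ⊤ : Submodule R M) := by
    refine Submodule.smul_induction_on hm (fun r hr n _ => ?_) (fun a b ha hb => ?_)
    · constructor
      · rw [QuadraticMap.map_smul, smul_eq_mul]
        exact Ideal.mul_mem_right _ _ (Ideal.mul_mem_right _ _ hr)
      · exact Submodule.smul_mem_smul hr Submodule.mem_top
    · constructor
      · rw [map_add' Q a b]
        exact Ideal.add_mem _ (Ideal.add_mem _ ha.1 hb.1) (polar_mem_of Q a hb.2)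
      · exact Submodule.add_mem _ ha.2 hb.2
  exact this.1

instance : IsScalarTower R 𝕜 Mb := by
  apply IsScalarTower.of_algebraMap_smul
  intro r x
  obtain ⟨m, rfl⟩ := Submodule.Quotient.mk_surjective _ x
  rw [Ideal.Quotient.algebraMap_eq]
  rw [Module.Quotient.mk_smul_mk, Submodule.Quotient.mk_smul]

noncomputable def bbarAux (Q : QuadraticForm R M) : M →ₗ[R] (Mb →ₗ[R] 𝕜) where
  toFun x := Submodule.liftQ _ ((Algebra.linearMap R 𝕜).comp (Q.polarBilin x))
      (by intro m hm
          simp only [LinearMap.mem_ker, LinearMap.comp_apply, Algebra.linearMap_apply,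
            polarBilin_apply_apply]
          rw [Ideal.Quotient.algebraMap_eq, Ideal.Quotient.eq_zero_iff_mem]
          exact polar_mem_of Q x hm)
  map_add' x y := by
    refine Submodule.linearMap_qext _ ?_
    ext m
    simp [polar_add_left]
  map_smul' r x := by
    refine Submodule.linearMap_qext _ ?_
    ext m
    simp [polar_smul_left, Algebra.smul_def, Ideal.Quotient.algebraMap_eq]

lemma bbarAux_apply (Q : QuadraticForm R M) (x y : M) :
    bbarAux Q x (mkk y) = π (polar Q x y) := rfl

noncomputable def bbarR (Q : QuadraticForm R M) : Mb →ₗ[R] (Mb →ₗ[R] 𝕜) :=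
  Submodule.liftQ _ (bbarAux Q)
    (by intro m hm
        rw [LinearMap.mem_ker]
        refine Submodule.linearMap_qext _ ?_
        ext y
        simp only [LinearMap.comp_apply, Submodule.mkQ_apply, LinearMap.zero_comp,
          LinearMap.zero_apply]
        show π (polar Q m y) = 0
        rw [Ideal.Quotient.eq_zero_iff_mem, polar_comm]
        exact polar_mem_of Q y hm)

lemma bbarR_apply (Q : QuadraticForm R M) (x y : M) :
    bbarR Q (mkk x) (mkk y) = π (polar Q x y) := rfl

noncomputable def bbar (Q : QuadraticForm R M) : Mb →ₗ[𝕜] (Mb →ₗ[𝕜] 𝕜) :=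
  LinearMap.mk₂ 𝕜 (fun x y => bbarR Q x y)
    (fun x y z => by show bbarR Q (x + y) z = bbarR Q x z + bbarR Q y z
                     rw [map_add, LinearMap.add_apply])
    (fun c x z => by
      obtain ⟨r, rfl⟩ := Ideal.Quotient.mk_surjective c
      obtain ⟨m, rfl⟩ := Submodule.Quotient.mk_surjective _ x
      obtain ⟨w, rfl⟩ := Submodule.Quotient.mk_surjective _ z
      show bbarR Q ((π r) • mkk m) (mkk w) = π r * bbarR Q (mkk m) (mkk w)
      rw [Module.Quotient.mk_smul_mk, bbarR_apply, bbarR_apply, polar_smul_left, smul_eq_mul,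
        map_mul])
    (fun x y z => by show bbarR Q x (y + z) = bbarR Q x y + bbarR Q x z
                     rw [map_add])
    (fun c x z => by
      obtain ⟨r, rfl⟩ := Ideal.Quotient.mk_surjective c
      obtain ⟨m, rfl⟩ := Submodule.Quotient.mk_surjective _ x
      obtain ⟨w, rfl⟩ := Submodule.Quotient.mk_surjective _ z
      show bbarR Q (mkk m) ((π r) • mkk w) = π r * bbarR Q (mkk m) (mkk w)
      rw [Module.Quotient.mk_smul_mk, bbarR_apply, bbarR_apply, polar_smul_right, smul_eq_mul,
        map_mul])

lemma bbar_apply (Q : QuadraticForm R M) (x y : M) :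
    bbar Q (mkk x) (mkk y) = π (polar Q x y) := rfl

noncomputable def qbar (Q : QuadraticForm R M) : QuadraticForm 𝕜 Mb where
  toFun x := Quotient.liftOn' x (fun m => π (Q m)) (by
    intro a b hab
    have hab' : a - b ∈ (maximalIdeal R • ⊤ : Submodule R M) :=
      (Submodule.quotientRel_def _).mp (Quotient.eq''.mp (Quotient.sound' hab))
    show π (Q a) = π (Q b)
    have : Q a = Q b + Q (a - b) + polar Q b (a - b) := by
      rw [← map_add' Q b (a - b)]
      congr 1
      abel
    rw [this, map_add, map_add]
    rw [Ideal.Quotient.eq_zero_iff_mem.mpr (quadratic_mem_of Q hab'),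
      Ideal.Quotient.eq_zero_iff_mem.mpr (polar_mem_of Q b hab'), add_zero, add_zero])
  toFun_smul c x := by
    obtain ⟨r, rfl⟩ := Ideal.Quotient.mk_surjective c
    obtain ⟨m, rfl⟩ := Submodule.Quotient.mk_surjective _ x
    show Quotient.liftOn' ((π r) • mkk m) _ _ = _
    rw [Module.Quotient.mk_smul_mk]
    show π (Q (r • m)) = (π r * π r) • π (Q m)
    rw [QuadraticMap.map_smul, smul_eq_mul, smul_eq_mul, map_mul, map_mul]
  exists_companion' := by
    refine ⟨bbar Q, ?_⟩
    intro x y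
    obtain ⟨m, rfl⟩ := Submodule.Quotient.mk_surjective _ x
    obtain ⟨z, rfl⟩ := Submodule.Quotient.mk_surjective _ y
    show π (Q (m + z)) = π (Q m) + π (Q z) + bbar Q (mkk m) (mkk z)
    rw [bbar_apply, map_add' Q m z, map_add, map_add]

lemma qbar_mk (Q : QuadraticForm R M) (x : M) : qbar Q (mkk x) = π (Q x) := rfl

lemma qbar_polar (Q : QuadraticForm R M) (x y : M) :
    polar (qbar Q) (mkk x) (mkk y) = π (polar Q x y) := by
  rw [polar, ← Submodule.Quotient.mk_add, qbar_mk, qbar_mk, qbar_mk, polar, _root_.map_sub, _root_.map_sub]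

lemma qbar_polarBilin_nondeg [Module.Free R M] [Module.Finite R M] (Q : QuadraticForm R M)
    (hQ : Function.Bijective ⇑(QuadraticMap.polarBilin Q)) :
    LinearMap.BilinForm.Nondegenerate (polarBilin (qbar Q)) := by
  suffices hL : LinearMap.SeparatingLeft (polarBilin (qbar Q)) by
    exact ⟨hL, fun y hy => hL y fun x => by
      simpa [polarBilin_apply_apply, polar_comm] using hy x⟩
  intro xb hxb
  obtain ⟨x, rfl⟩ := Submodule.Quotient.mk_surjective _ xb
  rw [Submodule.Quotient.mk_eq_zero]
  have hphi : ∀ y : M, polar Q x y ∈ maximalIdeal R := by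
    intro y
    have := hxb (mkk y)
    rw [polarBilin_apply_apply, qbar_polar] at this
    exact Ideal.Quotient.eq_zero_iff_mem.mp this
  classical
  let b := Module.Free.chooseBasis R M
  have hrep : Q.polarBilin x = ∑ i, polar Q x (b i) • b.coord i := by
    refine b.ext fun i => ?_
    rw [LinearMap.sum_apply, polarBilin_apply_apply]
    rw [Finset.sum_eq_single i]
    · rw [LinearMap.smul_apply, Module.Basis.coord_apply, Module.Basis.repr_self, Finsupp.single_eq_same,
        smul_eq_mul, mul_one]
    · intro j _ hji
      rw [LinearMap.smul_apply, Module.Basis.coord_apply, Module.Basis.repr_self,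
        Finsupp.single_eq_of_ne' (Ne.symm hji), smul_zero]
    · intro h
      exact absurd (Finset.mem_univ i) h
  have hmem : Q.polarBilin x ∈ (maximalIdeal R • ⊤ : Submodule R (M →ₗ[R] R)) := by
    rw [hrep]
    refine Submodule.sum_mem _ fun i _ => ?_
    exact Submodule.smul_mem_smul (hphi (b i)) Submodule.mem_top
  let e : M ≃ₗ[R] (M →ₗ[R] R) := LinearEquiv.ofBijective (Q.polarBilin) hQ
  have hx : x ∈ Submodule.map (e.symm : (M →ₗ[R] R) →ₗ[R] M)
      (maximalIdeal R • ⊤ : Submodule R (M →ₗ[R] R)) := by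
    refine ⟨e x, hmem, ?_⟩
    simp [e]
  rwa [Submodule.map_smul'', Submodule.map_top, LinearEquiv.range] at hx

lemma qrefl_compat (Q : QuadraticForm R M) {v : M} (hv : IsUnit (Q v)) (z : M) :
    mkk (qrefl Q v z) = qrefl (qbar Q) (mkk v) (mkk z) := by
  have h1 : IsUnit (π (Q v)) := hv.map (π)
  have hpi : π (Ring.inverse (Q v)) * π (Q v) = 1 := by
    rw [← map_mul, Ring.inverse_mul_cancel _ hv, map_one]
  have hinv : π (Ring.inverse (Q v)) = Ring.inverse (π (Q v)) := by
    rw [← one_mul (Ring.inverse (π (Q v))), ← hpi, mul_assoc,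
      Ring.mul_inverse_cancel _ h1, mul_one]
  rw [qrefl_apply, qrefl_apply, qbar_mk, qbar_polar, Submodule.Quotient.mk_sub,
    ← Module.Quotient.mk_smul_mk, map_mul, hinv]

lemma prod_compat (Q : QuadraticForm R M) : ∀ (l' : List M), (∀ v ∈ l', IsUnit (Q v)) →
    ∀ z : M, mkk ((l'.map (qrefl Q)).prod z)
      = ((l'.map (fun v => qrefl (qbar Q) (mkk v))).prod) (mkk z) := by
  intro l'
  induction l' with
  | nil => intro _ z; simp
  | cons a t ih =>
      intro hl z
      rw [List.map_cons, List.prod_cons, List.map_cons, List.prod_cons]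
      show mkk (qrefl Q a ((t.map (qrefl Q)).prod z))
        = qrefl (qbar Q) (mkk a) (((t.map (fun v => qrefl (qbar Q) (mkk v))).prod) (mkk z))
      rw [← ih (fun v hv => hl v (List.mem_cons_of_mem _ hv)) z,
        qrefl_compat Q (hl a List.mem_cons_self)]

end Reduction

end CDlift



/-- Let `R` be a local ring with maximal ideal `𝔪` and residue field `k = R/𝔪` of
characteristic `≠ 2`, and let `M` be a free `R`-module of finite rank with a non-degenerate
quadratic form `Q`.  Then the reduction homomorphism `O_R(M) → O_k(M̄)` is surjective:
every `k`-linear automorphism `g` of `M̄ = M/𝔪M` preserving the reduced form `Q̄` (i.e.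
`Q̄(g x̄) = Q̄(x̄)`, expressed on lifts) lifts to an `R`-linear automorphism `f` of `M`
preserving `Q` whose reduction modulo `𝔪` is `g`. -/
theorem orthogonal_group_reduction_surjective
    {R M : Type*} [CommRing R] [IsLocalRing R] [AddCommGroup M] [Module R M]
    [Module.Free R M] [Module.Finite R M]
    (hchar : ringChar (ResidueField R) ≠ 2)
    (Q : QuadraticForm R M) (hQ : Function.Bijective ⇑(QuadraticMap.polarBilin Q))
    (g : (M ⧸ (maximalIdeal R • ⊤ : Submodule R M)) ≃ₗ[R ⧸ maximalIdeal R]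
         (M ⧸ (maximalIdeal R • ⊤ : Submodule R M)))
    (hg : ∀ x y : M, g (Submodule.Quotient.mk x) = Submodule.Quotient.mk y →
      Ideal.Quotient.mk (maximalIdeal R) (Q y) = Ideal.Quotient.mk (maximalIdeal R) (Q x)) :
    ∃ f : M ≃ₗ[R] M, (∀ m : M, Q (f m) = Q m) ∧
      ∀ x : M, g (Submodule.Quotient.mk x) = Submodule.Quotient.mk (f x) := by
  classical
  letI : Field (R ⧸ maximalIdeal R) := Ideal.Quotient.field _
  have h2 : (2 : R ⧸ maximalIdeal R) ≠ 0 := by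
    intro h20
    have h20' : ((2 : ℕ) : ResidueField R) = 0 := by
      have : ((2 : ℕ) : R ⧸ maximalIdeal R) = 0 := by push_cast; exact h20
      exact this
    have hdvd : ringChar (ResidueField R) ∣ 2 := ringChar.dvd h20'
    rcases (Nat.dvd_prime Nat.prime_two).mp hdvd with h1 | h1
    · exact CharP.ringChar_ne_one h1
    · exact hchar h1
  letI : Module.Finite R (M ⧸ (maximalIdeal R • ⊤ : Submodule R M)) :=
    Module.Finite.of_surjective (Submodule.mkQ _) (Submodule.Quotient.mk_surjective _)
  letI : Module.Finite (R ⧸ maximalIdeal R) (M ⧸ (maximalIdeal R • ⊤ : Submodule R M)) :=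
    Module.Finite.of_restrictScalars_finite R _ _
  have hQnd := CDlift.qbar_polarBilin_nondeg Q hQ
  have hgQ : ∀ x, CDlift.qbar Q (g x) = CDlift.qbar Q x := by
    intro x
    obtain ⟨m, rfl⟩ := Submodule.Quotient.mk_surjective _ x
    obtain ⟨y, hy⟩ := Submodule.Quotient.mk_surjective _ (g (Submodule.Quotient.mk m))
    rw [← hy, CDlift.qbar_mk, CDlift.qbar_mk]
    exact hg m y hy.symm
  obtain ⟨l, hlQ, hleq⟩ := CDlift.cartan_dieudonne h2
    (Module.finrank (R ⧸ maximalIdeal R) (M ⧸ (maximalIdeal R • ⊤ : Submodule R M)))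
    (CDlift.qbar Q) hQnd g hgQ rfl
  choose lift hlift using
    Submodule.Quotient.mk_surjective (maximalIdeal R • ⊤ : Submodule R M)
  set l' : List M := l.map lift with hl'def
  have hunit : ∀ v ∈ l', IsUnit (Q v) := by
    intro v hv
    rcases List.mem_map.mp hv with ⟨xb, hxb, rfl⟩
    have h0 : CDlift.qbar Q xb ≠ 0 := hlQ xb hxb
    rw [← hlift xb, CDlift.qbar_mk, Ne, Ideal.Quotient.eq_zero_iff_mem] at h0
    exact IsLocalRing.notMem_maximalIdeal.mp h0
  refine ⟨(l'.map (CDlift.qrefl Q)).prod, fun m => CDlift.prod_qrefl_map_quadratic Q l' m, ?_⟩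
  intro x
  rw [hleq, CDlift.prod_compat Q l' hunit x, hl'def, List.map_map]
  congr 1
  rw [show ((fun v => CDlift.qrefl (CDlift.qbar Q) (Submodule.Quotient.mk v)) ∘ lift)
      = fun a => CDlift.qrefl (CDlift.qbar Q) a from funext fun a => by simp [hlift a]]
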